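/- Data processing inequality for L-conditional entropy: if Y ↔ X ↔ Z is a Markov chain (i.e., Y and Z are conditionally independent given X), then H_L(Y|X) ≤ H_L(Y|Z). -/

import Mathlib

open Finset

noncomputable def condH {Ω ZT 𝒴 A : Type*} [Fintype Ω] [Fintype ZT] [DecidableEq ZT]
    (P : Ω → ℝ) (L : 𝒴 → A → ℝ) (Yv : Ω → 𝒴) (Zv : Ω → ZT) : ℝ :=
  ∑ z : ZT, sInf {r : ℝ | ∃ a : A,
    r = ∑ ω : Ω, (if Zv ω = z then P ω else 0) * L (Yv ω) a}

section aux
variable {Ω 𝒴 A : Type*} [Fintype Ω] (L : 𝒴 → A → ℝ) (Yv : Ω → 𝒴)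

noncomputable def fRisk (w : Ω → ℝ) : ℝ :=
  sInf {r : ℝ | ∃ a : A, r = ∑ ω, w ω * L (Yv ω) a}

variable (hA : ∀ w : Ω → ℝ, (∀ ω, 0 ≤ w ω) →
    ∃ a : A, ∀ a' : A, ∑ ω, w ω * L (Yv ω) a ≤ ∑ ω, w ω * L (Yv ω) a')

include hA

lemma fRisk_attain (w : Ω → ℝ) (hw : ∀ ω, 0 ≤ w ω) :
    ∃ a : A, fRisk L Yv w = ∑ ω, w ω * L (Yv ω) a ∧
      ∀ a' : A, ∑ ω, w ω * L (Yv ω) a ≤ ∑ ω, w ω * L (Yv ω) a' := by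
  obtain ⟨a, ha⟩ := hA w hw
  have hbdd : BddBelow {r : ℝ | ∃ a : A, r = ∑ ω, w ω * L (Yv ω) a} :=
    ⟨∑ ω, w ω * L (Yv ω) a, by rintro r ⟨a', rfl⟩; exact ha a'⟩
  have hmem : (∑ ω, w ω * L (Yv ω) a) ∈
      {r : ℝ | ∃ a : A, r = ∑ ω, w ω * L (Yv ω) a} := ⟨a, rfl⟩
  refine ⟨a, le_antisymm (csInf_le hbdd hmem) (le_csInf ⟨_, hmem⟩ ?_), ha⟩
  rintro r ⟨a', rfl⟩; exact ha a'

lemma fRisk_le (w : Ω → ℝ) (hw : ∀ ω, 0 ≤ w ω) (a' : A) :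
    fRisk L Yv w ≤ ∑ ω, w ω * L (Yv ω) a' := by
  obtain ⟨a, heq, ha⟩ := fRisk_attain L Yv hA w hw
  exact heq ▸ ha a'

lemma fRisk_zero : fRisk L Yv (0 : Ω → ℝ) = 0 := by
  obtain ⟨a, heq, _⟩ := fRisk_attain L Yv hA 0 (fun ω => le_rfl)
  simpa using heq

lemma fRisk_smul (c : ℝ) (hc : 0 ≤ c) (w : Ω → ℝ) (hw : ∀ ω, 0 ≤ w ω) :
    fRisk L Yv (c • w) = c * fRisk L Yv w := by
  obtain ⟨a0, heq0, ha0⟩ := fRisk_attain L Yv hA w hw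
  obtain ⟨a1, heq1, ha1⟩ := fRisk_attain L Yv hA (c • w)
      (fun ω => mul_nonneg hc (hw ω))
  have hsc : ∀ a : A, ∑ ω, (c • w) ω * L (Yv ω) a = c * ∑ ω, w ω * L (Yv ω) a := by
    intro a
    rw [Finset.mul_sum]
    refine Finset.sum_congr rfl fun ω _ => ?_
    simp [mul_assoc]
  apply le_antisymm
  · rw [heq1]
    calc ∑ ω, (c • w) ω * L (Yv ω) a1 ≤ ∑ ω, (c • w) ω * L (Yv ω) a0 := ha1 a0
    _ = c * ∑ ω, w ω * L (Yv ω) a0 := hsc a0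
    _ = c * fRisk L Yv w := by rw [heq0]
  · rw [heq1, hsc a1, heq0]
    exact mul_le_mul_of_nonneg_left (ha0 a1) hc

lemma fRisk_superadd (w w' : Ω → ℝ) (hw : ∀ ω, 0 ≤ w ω) (hw' : ∀ ω, 0 ≤ w' ω) :
    fRisk L Yv w + fRisk L Yv w' ≤ fRisk L Yv (w + w') := by
  obtain ⟨a, heq, _⟩ := fRisk_attain L Yv hA (w + w')
      (fun ω => add_nonneg (hw ω) (hw' ω))
  rw [heq]
  have : ∑ ω, (w + w') ω * L (Yv ω) a
      = (∑ ω, w ω * L (Yv ω) a) + ∑ ω, w' ω * L (Yv ω) a := by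
    rw [← Finset.sum_add_distrib]
    refine Finset.sum_congr rfl fun ω _ => ?_
    simp [add_mul]
  rw [this]
  exact add_le_add (fRisk_le L Yv hA w hw a) (fRisk_le L Yv hA w' hw' a)

lemma fRisk_sum {ι : Type*} (s : Finset ι) (u : ι → Ω → ℝ)
    (hu : ∀ i, ∀ ω, 0 ≤ u i ω) :
    ∑ i ∈ s, fRisk L Yv (u i) ≤ fRisk L Yv (∑ i ∈ s, u i) := by
  classical
  induction s using Finset.induction_on with
  | empty => simp [fRisk_zero L Yv hA]
  | insert i s hx ih =>
    rw [Finset.sum_insert hx, Finset.sum_insert hx]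
    calc fRisk L Yv (u i) + ∑ j ∈ s, fRisk L Yv (u j)
        ≤ fRisk L Yv (u i) + fRisk L Yv (∑ j ∈ s, u j) := by linarith [ih]
      _ ≤ fRisk L Yv (u i + ∑ j ∈ s, u j) :=
          fRisk_superadd L Yv hA _ _ (hu i) (fun ω => by
            rw [Finset.sum_apply]
            exact Finset.sum_nonneg fun j _ => hu j ω)

end aux

theorem stmt4 {Ω 𝒴 𝒳 𝒵 A : Type*} [Fintype Ω] [Fintype 𝒳] [Fintype 𝒵]
    [DecidableEq 𝒴] [DecidableEq 𝒳] [DecidableEq 𝒵]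
    (P : Ω → ℝ) (L : 𝒴 → A → ℝ) (Yv : Ω → 𝒴) (Xv : Ω → 𝒳) (Zv : Ω → 𝒵)
    (hnn : ∀ ω, 0 ≤ P ω) (h1 : ∑ ω, P ω = 1)
    (hMarkov : ∀ (y : 𝒴) (x : 𝒳) (z : 𝒵),
      (∑ ω, if Yv ω = y ∧ Xv ω = x ∧ Zv ω = z then P ω else 0) *
        (∑ ω, if Xv ω = x then P ω else 0) =
      (∑ ω, if Yv ω = y ∧ Xv ω = x then P ω else 0) *
        (∑ ω, if Xv ω = x ∧ Zv ω = z then P ω else 0))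
    (hattain : ∀ w : Ω → ℝ, (∀ ω, 0 ≤ w ω) →
      ∃ a : A, ∀ a' : A, ∑ ω, w ω * L (Yv ω) a ≤ ∑ ω, w ω * L (Yv ω) a') :
    condH P L Yv Xv ≤ condH P L Yv Zv := by
  classical
  -- weights
  set wX : 𝒳 → Ω → ℝ := fun x ω => if Xv ω = x then P ω else 0 with hwX
  set wZ : 𝒵 → Ω → ℝ := fun z ω => if Zv ω = z then P ω else 0 with hwZ
  have hwXnn : ∀ x ω, 0 ≤ wX x ω := fun x ω => by
    simp only [hwX]; split <;> simp [hnn ω]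
  have hwZnn : ∀ z ω, 0 ≤ wZ z ω := fun z ω => by
    simp only [hwZ]; split <;> simp [hnn ω]
  -- marginals
  set p : 𝒳 → ℝ := fun x => ∑ ω, if Xv ω = x then P ω else 0 with hp
  set s : 𝒳 → 𝒵 → ℝ := fun x z => ∑ ω, if Xv ω = x ∧ Zv ω = z then P ω else 0 with hs
  set c : 𝒳 → 𝒵 → ℝ := fun x z => if p x = 0 then 0 else s x z / p x with hc
  have hpnn : ∀ x, 0 ≤ p x := fun x =>
    Finset.sum_nonneg fun ω _ => by split <;> simp [hnn ω]
  have hsnn : ∀ x z, 0 ≤ s x z := fun x z =>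
    Finset.sum_nonneg fun ω _ => by split <;> simp [hnn ω]
  have hcnn : ∀ x z, 0 ≤ c x z := fun x z => by
    simp only [hc]; split
    · exact le_rfl
    · exact div_nonneg (hsnn x z) (hpnn x)
  -- if p x = 0 then wX x = 0
  have hp0 : ∀ x, p x = 0 → wX x = 0 := by
    intro x hx
    funext ω
    have := (Finset.sum_eq_zero_iff_of_nonneg
      (fun ω _ => by split <;> simp [hnn ω] : ∀ ω ∈ Finset.univ,
        0 ≤ if Xv ω = x then P ω else 0)).1 hx ω (Finset.mem_univ ω)
    simpa [hwX] using this
  -- key decomposition: ∑_ω (if Xv ω = x ∧ Zv ω = z) P * L = c x z * ∑_ω wX x * L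
  have hkey : ∀ (x : 𝒳) (z : 𝒵) (a : A),
      (∑ ω, (if Xv ω = x ∧ Zv ω = z then P ω else 0) * L (Yv ω) a)
        = c x z * ∑ ω, wX x ω * L (Yv ω) a := by
    intro x z a
    by_cases hx : p x = 0
    · have hz : ∀ ω, (if Xv ω = x ∧ Zv ω = z then P ω else 0) = 0 := by
        intro ω
        have h0 := congrFun (hp0 x hx) ω
        simp only [hwX, Pi.zero_apply] at h0
        by_cases hω : Xv ω = x
        · simp [hω] at h0 ⊢; intro; exact h0
        · simp [hω]
      simp [hc, hx, hz]
    · -- claim A, grouped by y over image of Yv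
      have hT : ∀ (F : 𝒴 → Ω → Prop) [∀ y ω, Decidable (F y ω)], True := fun _ _ => trivial
      have claimA :
          (∑ ω, (if Xv ω = x ∧ Zv ω = z then P ω else 0) * L (Yv ω) a) * p x
            = (∑ ω, wX x ω * L (Yv ω) a) * s x z := by
        have hLHS : (∑ ω, (if Xv ω = x ∧ Zv ω = z then P ω else 0) * L (Yv ω) a)
            = ∑ y ∈ Finset.univ.image Yv,
                (∑ ω, if Yv ω = y ∧ Xv ω = x ∧ Zv ω = z then P ω else 0) * L y a := by
          rw [← Finset.sum_fiberwise_of_maps_to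
            (fun ω _ => Finset.mem_image_of_mem Yv (Finset.mem_univ ω))
            (fun ω => (if Xv ω = x ∧ Zv ω = z then P ω else 0) * L (Yv ω) a)]
          refine Finset.sum_congr rfl fun y _ => ?_
          rw [Finset.sum_filter, Finset.sum_mul]
          refine Finset.sum_congr rfl fun ω _ => ?_
          by_cases hy : Yv ω = y <;> simp [hy] <;> split_ifs <;> simp_all
        have hRHS : (∑ ω, wX x ω * L (Yv ω) a)
            = ∑ y ∈ Finset.univ.image Yv,
                (∑ ω, if Yv ω = y ∧ Xv ω = x then P ω else 0) * L y a := by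
          rw [← Finset.sum_fiberwise_of_maps_to
            (fun ω _ => Finset.mem_image_of_mem Yv (Finset.mem_univ ω))
            (fun ω => wX x ω * L (Yv ω) a)]
          refine Finset.sum_congr rfl fun y _ => ?_
          rw [Finset.sum_filter, Finset.sum_mul]
          refine Finset.sum_congr rfl fun ω _ => ?_
          simp only [hwX]
          by_cases hy : Yv ω = y <;> simp [hy] <;> split_ifs <;> simp_all
        rw [hLHS, hRHS, Finset.sum_mul, Finset.sum_mul]
        refine Finset.sum_congr rfl fun y _ => ?_
        simp only [hp, hs]
        linear_combination L y a * hMarkov y x z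
      simp only [hc, if_neg hx]
      rw [div_mul_eq_mul_div, eq_div_iff hx]
      linarith [claimA]
  -- condH as fRisk sums
  have hX : condH P L Yv Xv = ∑ x, fRisk L Yv (wX x) := rfl
  have hZ : condH P L Yv Zv = ∑ z, fRisk L Yv (wZ z) := rfl
  rw [hX, hZ]
  -- each wZ z has same risk set as ∑ x, c x z • wX x
  have hZdecomp : ∀ z, fRisk L Yv (wZ z) = fRisk L Yv (∑ x, c x z • wX x) := by
    intro z
    unfold fRisk
    congr 1
    ext r
    constructor <;> rintro ⟨a, rfl⟩ <;> refine ⟨a, ?_⟩ <;>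
    · have h1z : ∀ a : A, (∑ ω, wZ z ω * L (Yv ω) a)
          = ∑ ω, (∑ x, c x z • wX x) ω * L (Yv ω) a := by
        intro a
        have step1 : (∑ ω, wZ z ω * L (Yv ω) a)
            = ∑ x, ∑ ω, (if Xv ω = x ∧ Zv ω = z then P ω else 0) * L (Yv ω) a := by
          rw [Finset.sum_comm]
          refine Finset.sum_congr rfl fun ω _ => ?_
          rw [← Finset.sum_mul]
          congr 1
          simp [hwZ, ite_and, Finset.sum_ite_eq]
        rw [step1]
        have step2 : (∑ ω, (∑ x, c x z • wX x) ω * L (Yv ω) a)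
            = ∑ x, c x z * ∑ ω, wX x ω * L (Yv ω) a := by
          simp only [Finset.sum_apply, Pi.smul_apply, smul_eq_mul, Finset.sum_mul]
          rw [Finset.sum_comm]
          refine Finset.sum_congr rfl fun x _ => ?_
          rw [Finset.mul_sum]
          refine Finset.sum_congr rfl fun ω _ => ?_
          ring
        rw [step2]
        exact Finset.sum_congr rfl fun x _ => hkey x z a
      rw [h1z a]
  calc ∑ x, fRisk L Yv (wX x)
      ≤ ∑ z, ∑ x, c x z * fRisk L Yv (wX x) := by
        rw [Finset.sum_comm]
        refine Finset.sum_le_sum fun x _ => ?_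
        rw [← Finset.sum_mul]
        by_cases hx : p x = 0
        · rw [hp0 x hx, fRisk_zero L Yv hattain]
          simp
        · have hcs : ∑ z, c x z = 1 := by
            have hps : ∑ z, s x z = p x := by
              rw [hs, hp]
              rw [Finset.sum_comm]
              refine Finset.sum_congr rfl fun ω _ => ?_
              simp [ite_and, Finset.sum_ite_eq]
            simp only [hc, if_neg hx]
            rw [← Finset.sum_div, hps, div_self hx]
          rw [hcs, one_mul]
    _ ≤ ∑ z, fRisk L Yv (wZ z) := by
        refine Finset.sum_le_sum fun z _ => ?_
        rw [hZdecomp z]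
        calc ∑ x, c x z * fRisk L Yv (wX x)
            = ∑ x, fRisk L Yv (c x z • wX x) := by
              refine Finset.sum_congr rfl fun x _ => ?_
              rw [fRisk_smul L Yv hattain (c x z) (hcnn x z) (wX x) (hwXnn x)]
          _ ≤ fRisk L Yv (∑ x, c x z • wX x) :=
              fRisk_sum L Yv hattain Finset.univ _
                (fun x ω => by
                  simp only [Pi.smul_apply, smul_eq_mul]
                  exact mul_nonneg (hcnn x z) (hwXnn x ω))
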